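/- Let X be a Hausdorff space without isolated points and let g₁, ..., gᵣ be non-trivial homeomorphisms of X. Then there exist non-empty open subsets U₁, ..., Uᵣ of X such that the 2r sets U₁, ..., Uᵣ, g₁(U₁), ..., gᵣ(Uᵣ) are pairwise disjoint. -/
import Mathlib

lemma aux_points_for_homeos {X : Type*} [TopologicalSpace X] [T2Space X]
    (hX : ∀ x : X, Filter.NeBot (nhdsWithin x {x}ᶜ)) :
    ∀ (r : ℕ) (g : Fin r → X ≃ₜ X), (∀ i, ∃ x, g i x ≠ x) →
      ∃ x : Fin r → X, Function.Injective (Sum.elim x fun i => g i (x i)) := by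
  intro r
  induction r with
  | zero =>
    intro g _
    exact ⟨Fin.elim0, fun a => a.elim (fun i => i.elim0) (fun i => i.elim0)⟩
  | succ n ih =>
    intro g hg
    obtain ⟨x, hx⟩ := ih (fun i => g i.castSucc) (fun i => hg i.castSucc)
    set p : Fin n ⊕ Fin n → X := Sum.elim x fun i => g i.castSucc (x i) with hp
    have hF : (Set.range p).Finite := Set.finite_range p
    obtain ⟨x₀, hx₀⟩ := hg (Fin.last n)
    have hV : IsOpen {z | g (Fin.last n) z ≠ z} := by
      have h1 : {z | g (Fin.last n) z ≠ z} = {z | g (Fin.last n) z = z}ᶜ := rfl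
      rw [h1]
      exact (isClosed_eq (g (Fin.last n)).continuous continuous_id).isOpen_compl
    haveI := hX x₀
    have hVinf : {z | g (Fin.last n) z ≠ z}.Infinite :=
      infinite_of_mem_nhds x₀ (hV.mem_nhds hx₀)
    have hne : ({z | g (Fin.last n) z ≠ z} \
        (Set.range p ∪ (g (Fin.last n)) ⁻¹' (Set.range p))).Nonempty := by
      refine Set.Infinite.nonempty (hVinf.diff ?_)
      exact hF.union (hF.preimage ((g (Fin.last n)).injective.injOn))
    obtain ⟨y, hyV, hyF⟩ := hne
    have hy1 : ∀ j, y ≠ p j := fun j h => hyF (Or.inl ⟨j, h.symm⟩)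
    have hy2 : ∀ j, g (Fin.last n) y ≠ p j := fun j h => hyF (Or.inr ⟨j, h.symm⟩)
    have hy3 : g (Fin.last n) y ≠ y := hyV
    refine ⟨Fin.snoc x y, ?_⟩
    rintro (a | a) (b | b) hab
    · induction a using Fin.lastCases with
      | last =>
        induction b using Fin.lastCases with
        | last => rfl
        | cast j =>
          simp only [Sum.elim_inl, Fin.snoc_last, Fin.snoc_castSucc] at hab
          exact absurd hab (hy1 (Sum.inl j))
      | cast i =>
        induction b using Fin.lastCases with
        | last =>
          simp only [Sum.elim_inl, Fin.snoc_last, Fin.snoc_castSucc] at hab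
          exact absurd hab.symm (hy1 (Sum.inl i))
        | cast j =>
          simp only [Sum.elim_inl, Fin.snoc_castSucc] at hab
          have : (Sum.inl i : Fin n ⊕ Fin n) = Sum.inl j := hx hab
          simp only [Sum.inl.injEq] at this
          rw [this]
    · induction a using Fin.lastCases with
      | last =>
        induction b using Fin.lastCases with
        | last =>
          simp only [Sum.elim_inl, Sum.elim_inr, Fin.snoc_last] at hab
          exact absurd hab.symm hy3
        | cast j =>
          simp only [Sum.elim_inl, Sum.elim_inr, Fin.snoc_last, Fin.snoc_castSucc] at hab
          exact absurd hab (hy1 (Sum.inr j))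
      | cast i =>
        induction b using Fin.lastCases with
        | last =>
          simp only [Sum.elim_inl, Sum.elim_inr, Fin.snoc_last, Fin.snoc_castSucc] at hab
          exact absurd hab.symm (hy2 (Sum.inl i))
        | cast j =>
          simp only [Sum.elim_inl, Sum.elim_inr, Fin.snoc_castSucc] at hab
          have : (Sum.inl i : Fin n ⊕ Fin n) = Sum.inr j := hx hab
          simp at this
    · induction a using Fin.lastCases with
      | last =>
        induction b using Fin.lastCases with
        | last =>
          simp only [Sum.elim_inl, Sum.elim_inr, Fin.snoc_last] at hab
          exact absurd hab hy3
        | cast j =>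
          simp only [Sum.elim_inl, Sum.elim_inr, Fin.snoc_last, Fin.snoc_castSucc] at hab
          exact absurd hab (hy2 (Sum.inl j))
      | cast i =>
        induction b using Fin.lastCases with
        | last =>
          simp only [Sum.elim_inl, Sum.elim_inr, Fin.snoc_last, Fin.snoc_castSucc] at hab
          exact absurd hab.symm (hy1 (Sum.inr i))
        | cast j =>
          simp only [Sum.elim_inl, Sum.elim_inr, Fin.snoc_castSucc] at hab
          have : (Sum.inr i : Fin n ⊕ Fin n) = Sum.inl j := hx hab
          simp at this
    · induction a using Fin.lastCases with
      | last =>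
        induction b using Fin.lastCases with
        | last => rfl
        | cast j =>
          simp only [Sum.elim_inr, Fin.snoc_last, Fin.snoc_castSucc] at hab
          exact absurd hab (hy2 (Sum.inr j))
      | cast i =>
        induction b using Fin.lastCases with
        | last =>
          simp only [Sum.elim_inr, Fin.snoc_last, Fin.snoc_castSucc] at hab
          exact absurd hab.symm (hy2 (Sum.inr i))
        | cast j =>
          simp only [Sum.elim_inr, Fin.snoc_castSucc] at hab
          have : (Sum.inr i : Fin n ⊕ Fin n) = Sum.inr j := hx hab
          simp only [Sum.inr.injEq] at this
          rw [this]

/-- Given non-trivial homeomorphisms `g₁, ..., gᵣ` of a Hausdorff space without isolated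
points, there are non-empty open sets `U₁, ..., Uᵣ` such that the `2r` sets
`U₁, ..., Uᵣ, g₁(U₁), ..., gᵣ(Uᵣ)` are pairwise disjoint. -/
theorem exists_disjoint_open_sets_for_homeomorphisms {X : Type*} [TopologicalSpace X]
    [T2Space X] (hX : ∀ x : X, Filter.NeBot (nhdsWithin x {x}ᶜ))
    (r : ℕ) (g : Fin r → X ≃ₜ X) (hg : ∀ i, ∃ x : X, g i x ≠ x) :
    ∃ U : Fin r → Set X, (∀ i, IsOpen (U i)) ∧ (∀ i, (U i).Nonempty) ∧
      Pairwise fun j k : Fin r ⊕ Fin r =>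
        Disjoint (Sum.elim U (fun i => (g i) '' (U i)) j)
          (Sum.elim U (fun i => (g i) '' (U i)) k) := by
  obtain ⟨x, hx⟩ := aux_points_for_homeos hX r g hg
  set p : Fin r ⊕ Fin r → X := Sum.elim x fun i => g i (x i) with hp
  obtain ⟨W, hW, hWd⟩ := (Set.finite_range p).t2_separation
  set U : Fin r → Set X := fun i => W (x i) ∩ (g i) ⁻¹' (W (g i (x i))) with hU
  have key : ∀ j, Sum.elim U (fun i => (g i) '' (U i)) j ⊆ W (p j) := by
    rintro (i | i)
    · exact Set.inter_subset_left
    · exact (Set.image_mono Set.inter_subset_right).trans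
        (Set.image_preimage_subset _ _)
  refine ⟨U, fun i => ?_, fun i => ⟨x i, (hW _).1, (hW _).1⟩, fun j k hjk => ?_⟩
  · exact ((hW _).2).inter ((g i).continuous.isOpen_preimage _ ((hW _).2))
  · exact (hWd (Set.mem_range_self j) (Set.mem_range_self k) (hx.ne hjk)).mono
      (key j) (key k)
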